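/- Let μ ∈ L^∞(Δ) with ‖μ‖_∞ = k > 0, and suppose there is a sequence φₙ ∈ A(Δ) such that k‖φₙ‖ − Re ∫∫_Δ μφₙ → 0 and |φₙ(z)| → ∞ for almost every z in a set E ⊂ Δ of full measure in Δ \ A (for some compact A). Then the normalized sequence φₙ/‖φₙ‖ is a Hamilton sequence for μ: ∫∫_Δ μ (φₙ/‖φₙ‖) → k. Consequently μ is infinitesimally extremal, i.e., ‖ν‖_∞ ≥ k for every ν ∈ L^∞(Δ) with ∫∫_Δ νφ = ∫∫_Δ μφ for all φ ∈ A(Δ). -/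

import Mathlib

open Set MeasureTheory Metric Filter
open scoped ENNReal NNReal

/-- Bound `‖∫ g·f‖ ≤ c·∫‖f‖` for `g` a.e. bounded by `c` and `f` integrable on the unit disk. -/
lemma my_bound (g f : ℂ → ℂ) (c : ℝ)
    (hg : AEStronglyMeasurable g (volume.restrict (ball (0:ℂ) 1)))
    (hgc : ∀ᵐ z ∂(volume.restrict (ball (0:ℂ) 1)), ‖g z‖ ≤ c)
    (hf : IntegrableOn f (ball (0:ℂ) 1)) :
    ‖∫ z in ball (0:ℂ) 1, g z * f z‖ ≤ c * ∫ z in ball (0:ℂ) 1, ‖f z‖ := by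
  have hint : IntegrableOn (fun z => g z * f z) (ball (0:ℂ) 1) := by
    refine Integrable.mono' (hf.norm.const_mul c) (hg.mul hf.aestronglyMeasurable) ?_
    filter_upwards [hgc] with z hz
    rw [norm_mul]
    exact mul_le_mul_of_nonneg_right hz (norm_nonneg _)
  calc ‖∫ z in ball (0:ℂ) 1, g z * f z‖ ≤ ∫ z in ball (0:ℂ) 1, ‖g z * f z‖ :=
        norm_integral_le_integral_norm _
    _ ≤ ∫ z in ball (0:ℂ) 1, c * ‖f z‖ := by
        refine integral_mono_ae hint.norm (hf.norm.const_mul c) ?_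
        filter_upwards [hgc] with z hz
        rw [norm_mul]
        exact mul_le_mul_of_nonneg_right hz (norm_nonneg _)
    _ = c * ∫ z in ball (0:ℂ) 1, ‖f z‖ := integral_const_mul c _

/-- If `‖φₙ‖ → ∞` a.e. on the complement (in the disk) of a compact set `A`, then
`∫‖φₙ‖ → ∞`. -/
lemma my_norm_tendsto (A : Set ℂ) (hA : IsCompact A) (hAΔ : A ⊆ ball (0 : ℂ) 1)
    (φ : ℕ → ℂ → ℂ)
    (hφint : ∀ n, IntegrableOn (φ n) (ball (0 : ℂ) 1))
    (hblow : ∀ᵐ z ∂(volume.restrict (ball (0 : ℂ) 1 \ A)),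
        Tendsto (fun n => ‖φ n z‖) atTop atTop) :
    Tendsto (fun n => ∫ z in ball (0 : ℂ) 1, ‖φ n z‖) atTop atTop := by
  set S : Set ℂ := ball (0 : ℂ) 1 \ A with hS
  have hSsub : S ⊆ ball (0 : ℂ) 1 := diff_subset
  have hSopen : IsOpen S := isOpen_ball.sdiff hA.isClosed
  have hSne : S.Nonempty := by
    by_contra h
    rw [Set.not_nonempty_iff_eq_empty, diff_eq_empty] at h
    have h1 : closure (ball (0:ℂ) 1) ⊆ A := hA.isClosed.closure_subset_iff.2 h
    rw [closure_ball (0:ℂ) one_ne_zero] at h1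
    have : (1:ℂ) ∈ A := h1 (by simp [mem_closedBall])
    have := hAΔ this
    simp [mem_ball] at this
  have hSpos : 0 < volume S := hSopen.measure_pos volume hSne
  have h1 : ∀ᵐ z ∂(volume.restrict S),
      Tendsto (fun n => (‖φ n z‖₊ : ℝ≥0∞)) atTop (nhds ⊤) := by
    filter_upwards [hblow] with z hz
    have h2 : Tendsto (fun n => ENNReal.ofReal ‖φ n z‖) atTop (nhds ⊤) :=
      ENNReal.tendsto_ofReal_atTop.comp hz
    simp only [ofReal_norm_eq_enorm, enorm_eq_nnnorm] at h2
    exact h2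
  have hliminf : Filter.liminf (fun n => ∫⁻ z in S, (‖φ n z‖₊ : ℝ≥0∞) ∂volume) atTop = ⊤ := by
    have hmeas : ∀ n, AEMeasurable (fun z => (‖φ n z‖₊ : ℝ≥0∞)) (volume.restrict S) := by
      intro n
      exact ((hφint n).aestronglyMeasurable.mono_measure
        (Measure.restrict_mono hSsub le_rfl)).enorm
    have fat := lintegral_liminf_le' hmeas (μ := volume.restrict S) (u := atTop)
    have hl : (∫⁻ z in S, Filter.liminf (fun n => (‖φ n z‖₊ : ℝ≥0∞)) atTop ∂volume) = ⊤ := by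
      have : (∫⁻ z in S, Filter.liminf (fun n => (‖φ n z‖₊ : ℝ≥0∞)) atTop ∂volume)
          = ∫⁻ _ in S, ⊤ ∂volume := by
        refine lintegral_congr_ae ?_
        filter_upwards [h1] with z hz
        exact hz.liminf_eq
      rw [this, setLIntegral_const]
      exact ENNReal.top_mul hSpos.ne'
    exact top_le_iff.1 (hl ▸ fat)
  refine Filter.tendsto_atTop.2 fun b => ?_
  have hev : ∀ᶠ n in atTop, ENNReal.ofReal b < ∫⁻ z in S, (‖φ n z‖₊ : ℝ≥0∞) ∂volume := by
    refine eventually_lt_of_lt_liminf ?_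
    rw [hliminf]; exact ENNReal.ofReal_lt_top
  filter_upwards [hev] with n hn
  have hIS : IntegrableOn (φ n) S := (hφint n).mono_set hSsub
  have hfin : (∫⁻ z in S, (‖φ n z‖₊ : ℝ≥0∞) ∂volume) ≠ ⊤ := hIS.2.ne
  have hb : b ≤ (∫⁻ z in S, (‖φ n z‖₊ : ℝ≥0∞) ∂volume).toReal :=
    (ENNReal.ofReal_le_iff_le_toReal hfin).1 hn.le
  have heq : ∫ z in S, ‖φ n z‖ = (∫⁻ z in S, (‖φ n z‖₊ : ℝ≥0∞) ∂volume).toReal :=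
    integral_norm_eq_lintegral_enorm hIS.aestronglyMeasurable
  have hmono : ∫ z in S, ‖φ n z‖ ≤ ∫ z in ball (0:ℂ) 1, ‖φ n z‖ := by
    refine setIntegral_mono_set (hφint n).norm ?_ (HasSubset.Subset.eventuallyLE hSsub)
    filter_upwards with z using norm_nonneg _
  linarith [heq ▸ hb]

/-- if `μ ∈ L^∞(Δ)` with `‖μ‖_∞ = k > 0` admits a sequence `φₙ ∈ A(Δ)` with
`k‖φₙ‖ - Re ∫∫ μφₙ → 0` and `|φₙ| → ∞` a.e. on `Δ \ A` for some compact `A ⊂ Δ`, then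
`φₙ/‖φₙ‖` is a Hamilton sequence for `μ` and `μ` is infinitesimally extremal. -/
theorem hamilton_sequence_and_extremality
    (μ : ℂ → ℂ) (k : ℝ) (hk : 0 < k)
    (hμm : Measurable μ)
    -- `‖μ‖_∞ = k`: a.e. bounded by `k` on `Δ` ...
    (hμk : ∀ᵐ z ∂(volume.restrict (ball (0 : ℂ) 1)), ‖μ z‖ ≤ k)
    -- ... and no smaller essential bound:
    (hμk' : ∀ c : ℝ, (∀ᵐ z ∂(volume.restrict (ball (0 : ℂ) 1)), ‖μ z‖ ≤ c) → k ≤ c)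
    (A : Set ℂ) (hA : IsCompact A) (hAΔ : A ⊆ ball (0 : ℂ) 1)
    (φ : ℕ → ℂ → ℂ)
    (hφholo : ∀ n, DifferentiableOn ℂ (φ n) (ball (0 : ℂ) 1))
    (hφint : ∀ n, IntegrableOn (φ n) (ball (0 : ℂ) 1))
    -- `k‖φₙ‖ - Re ∫∫_Δ μ φₙ → 0`:
    (hdelta : Tendsto (fun n =>
        k * (∫ z in ball (0 : ℂ) 1, ‖φ n z‖) -
          (∫ z in ball (0 : ℂ) 1, μ z * φ n z).re) atTop (nhds 0))
    -- `|φₙ(z)| → ∞` for a.e. `z ∈ Δ \ A`: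
    (hblow : ∀ᵐ z ∂(volume.restrict (ball (0 : ℂ) 1 \ A)),
        Tendsto (fun n => ‖φ n z‖) atTop atTop) :
    -- `φₙ/‖φₙ‖` is a Hamilton sequence for `μ`:
    Tendsto (fun n => ∫ z in ball (0 : ℂ) 1,
        μ z * (φ n z / ((∫ w in ball (0 : ℂ) 1, ‖φ n w‖ : ℝ) : ℂ)))
      atTop (nhds (k : ℂ)) ∧
    -- `μ` is infinitesimally extremal: every `ν` infinitesimally equivalent to `μ`
    -- has essential sup norm at least `k`:
    (∀ ν : ℂ → ℂ, Measurable ν →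
      (∀ φ' : ℂ → ℂ, DifferentiableOn ℂ φ' (ball (0 : ℂ) 1) →
        IntegrableOn φ' (ball (0 : ℂ) 1) →
        ∫ z in ball (0 : ℂ) 1, ν z * φ' z = ∫ z in ball (0 : ℂ) 1, μ z * φ' z) →
      ∀ c : ℝ, (∀ᵐ z ∂(volume.restrict (ball (0 : ℂ) 1)), ‖ν z‖ ≤ c) → k ≤ c) := by
  set N : ℕ → ℝ := fun n => ∫ z in ball (0:ℂ) 1, ‖φ n z‖ with hNdef
  have hNtop : Tendsto N atTop atTop := my_norm_tendsto A hA hAΔ φ hφint hblow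
  have hN1 : ∀ᶠ n in atTop, 1 ≤ N n := hNtop.eventually_ge_atTop 1
  set I : ℕ → ℂ := fun n => (∫ z in ball (0:ℂ) 1, μ z * φ n z) / ((N n : ℝ) : ℂ) with hIdef
  have hIeq : ∀ n, (∫ z in ball (0:ℂ) 1, μ z * (φ n z / ((N n : ℝ) : ℂ))) = I n := by
    intro n
    rw [hIdef]
    simp only [← mul_div_assoc]
    exact integral_div ((N n : ℝ) : ℂ) (fun z => μ z * φ n z)
  have hnum : ∀ n, ‖∫ z in ball (0:ℂ) 1, μ z * φ n z‖ ≤ k * N n := fun n =>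
    my_bound μ (φ n) k hμm.aestronglyMeasurable hμk (hφint n)
  have hInorm : ∀ᶠ n in atTop, ‖I n‖ ≤ k := by
    filter_upwards [hN1] with n hn
    have hNpos : 0 < N n := lt_of_lt_of_le one_pos hn
    rw [hIdef]
    simp only
    rw [norm_div, Complex.norm_real, Real.norm_of_nonneg hNpos.le, div_le_iff₀ hNpos]
    exact hnum n
  have hRe : Tendsto (fun n => (I n).re) atTop (nhds k) := by
    have h0 : Tendsto (fun n => k - (I n).re) atTop (nhds 0) := by
      refine squeeze_zero' ?_ ?_ hdelta
      · filter_upwards [hInorm] with n hn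
        have h1 : (I n).re ≤ ‖I n‖ := by
          exact Complex.re_le_norm _
        linarith
      · filter_upwards [hN1] with n hn
        have hNpos : 0 < N n := lt_of_lt_of_le one_pos hn
        have hre : (I n).re = (∫ z in ball (0:ℂ) 1, μ z * φ n z).re / N n := by
          rw [hIdef]; simp [Complex.div_ofReal_re]
        have hle : (∫ z in ball (0:ℂ) 1, μ z * φ n z).re ≤ k * N n := by
          have := Complex.re_le_norm (∫ z in ball (0:ℂ) 1, μ z * φ n z)
          exact this.trans (hnum n)
        have key : k - (I n).re = (k * N n - (∫ z in ball (0:ℂ) 1, μ z * φ n z).re) / N n := by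
          rw [hre]; field_simp
        rw [key]
        exact div_le_self (by linarith) hn
    have h2 := (tendsto_const_nhds (x := k) (f := atTop)).sub h0
    simpa using h2
  have hsq : Tendsto (fun n => Complex.normSq (I n - (k:ℂ))) atTop (nhds 0) := by
    refine squeeze_zero' (g := fun n => ((I n).re - k)^2 + (k^2 - (I n).re^2)) ?_ ?_ ?_
    · filter_upwards with n using Complex.normSq_nonneg _
    · filter_upwards [hInorm] with n hn
      have h1 : (I n).re^2 + (I n).im^2 ≤ k^2 := by
        have h2 : ‖I n‖ ^ 2 ≤ k ^ 2 := by
          have : ‖I n‖ ≤ k := by rwa []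
          exact pow_le_pow_left₀ (norm_nonneg _) this 2
        rw [Complex.sq_norm, Complex.normSq_apply] at h2
        nlinarith [h2]
      have h3 : Complex.normSq (I n - (k:ℂ)) = ((I n).re - k)^2 + (I n).im^2 := by
        rw [Complex.normSq_apply]
        simp [Complex.sub_re, Complex.sub_im]
        ring
      rw [h3]
      nlinarith [h1]
    · have hg : Tendsto (fun n => ((I n).re - k)^2 + (k^2 - (I n).re^2)) atTop
          (nhds ((k - k)^2 + (k^2 - k^2))) :=
        ((hRe.sub tendsto_const_nhds).pow 2).add (tendsto_const_nhds.sub (hRe.pow 2))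
      simpa using hg
  have hmain : Tendsto I atTop (nhds (k:ℂ)) := by
    rw [tendsto_iff_norm_sub_tendsto_zero]
    have h2 : Tendsto (fun n => Real.sqrt (Complex.normSq (I n - (k:ℂ)))) atTop
        (nhds (Real.sqrt 0)) := (Real.continuous_sqrt.tendsto 0).comp hsq
    rw [Real.sqrt_zero] at h2
    have h3 : (fun n => ‖I n - (k:ℂ)‖) = fun n => Real.sqrt (Complex.normSq (I n - (k:ℂ))) := by
      funext n
      rw [Complex.norm_def]
    rw [h3]
    exact h2
  constructor
  · have h4 : (fun n => ∫ z in ball (0:ℂ) 1, μ z * (φ n z / ((N n : ℝ) : ℂ))) = I :=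
      funext hIeq
    rw [h4]
    exact hmain
  · intro ν hνm hνeq c hνc
    have hJle : ∀ᶠ n in atTop, ‖I n‖ ≤ c := by
      filter_upwards [hN1] with n hn
      have hNpos : 0 < N n := lt_of_lt_of_le one_pos hn
      have h5 : ‖∫ z in ball (0:ℂ) 1, μ z * φ n z‖ ≤ c * N n := by
        rw [← hνeq (φ n) (hφholo n) (hφint n)]
        exact my_bound ν (φ n) c hνm.aestronglyMeasurable hνc (hφint n)
      rw [hIdef]
      simp only
      rw [norm_div, Complex.norm_real, Real.norm_of_nonneg hNpos.le, div_le_iff₀ hNpos]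
      exact h5
    have h6 : ‖(k:ℂ)‖ ≤ c := le_of_tendsto hmain.norm hJle
    rwa [Complex.norm_real, Real.norm_of_nonneg hk.le] at h6
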